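/- Let Z̃_i := H_i H_{i+1} ⋯ H_{n−1} Φ H_1 H_2 ⋯ H_{i−1} for 1 ≤ i ≤ n. Then for every rational function f in z_1,…,z_n over F one has Z̃_i f(z) = Σ_{I ⊆ {1,…,n}, i ∈ I} r_I^{(i)}(z) f(Iz), the sum being over all subsets I of {1,…,n} containing i. -/

import Mathlib

open scoped BigOperators Classical

noncomputable section

/-- The ground field `F = ℚ(q,t)`. -/
abbrev F : Type := FractionRing (MvPolynomial (Fin 2) ℚ)

/-- The indeterminate `q` of `F = ℚ(q,t)`. -/
def q : F := algebraMap (MvPolynomial (Fin 2) ℚ) F (MvPolynomial.X 0)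

/-- The indeterminate `t` of `F = ℚ(q,t)`. -/
def t : F := algebraMap (MvPolynomial (Fin 2) ℚ) F (MvPolynomial.X 1)

/-- A composition with (at most) `n` parts: nonzero entries only in positions `1,…,n`. -/
def IsComp (n : ℕ) (η : ℕ → ℕ) : Prop := ∀ j, η j ≠ 0 → j ∈ Finset.Icc 1 n

/-- The modulus `|η| = η_1 + ⋯ + η_n`. -/
def wt (n : ℕ) (η : ℕ → ℕ) : ℕ := ∑ j ∈ Finset.Icc 1 n, η j

/-- `l'_η(i) = #{j<i : η_j ≥ η_i} + #{j>i : η_j > η_i}`. -/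
def lprime (n : ℕ) (η : ℕ → ℕ) (i : ℕ) : ℕ :=
  ((Finset.Icc 1 n).filter fun j => j < i ∧ η i ≤ η j).card +
  ((Finset.Icc 1 n).filter fun j => i < j ∧ η i < η j).card

/-- The spectral vector `η̄` with parameters `qp, tp`: `η̄_i = qp^(η_i) tp^(-l'_η(i))`. -/
def spec (qp tp : F) (n : ℕ) (η : ℕ → ℕ) : ℕ → F := fun i =>
  qp ^ (η i) * tp ^ (-(lprime n η i : ℤ))

/-- The finitely supported function obtained from `η` by truncating outside `[1,n]`. -/
def truncFinsupp (n : ℕ) (η : ℕ → ℕ) : ℕ →₀ ℕ :=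
  Finsupp.onFinset (Finset.Icc 1 n) (fun j => if j ∈ Finset.Icc 1 n then η j else 0)
    (fun a ha => by by_contra h; simp [h] at ha)

/-- The point obtained from `z` by exchanging coordinates `i` and `j`. -/
def swapPt (i j : ℕ) (z : ℕ → F) : ℕ → F :=
  fun k => if k = i then z j else if k = j then z i else z k

/-- The transposition operator `s_i`. -/
def sOp (i : ℕ) (f : (ℕ → F) → F) : (ℕ → F) → F := fun z => f (swapPt i (i+1) z)

/-- The Hecke operator `H_i` (with Hecke parameter `tp`). -/
def HOp (tp : F) (i : ℕ) (f : (ℕ → F) → F) : (ℕ → F) → F := fun z =>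
  (tp - 1) * z i / (z i - z (i+1)) * f z +
    (z i - tp * z (i+1)) / (z i - z (i+1)) * f (swapPt i (i+1) z)

/-- The point `(z_n/q, z_1, …, z_{n-1})` (coordinates outside `[1,n]` unchanged). -/
def deltaPt (qp : F) (n : ℕ) (z : ℕ → F) : ℕ → F := fun k =>
  if k = 1 then z n / qp else if k ≤ n then z (k-1) else z k

/-- The operator `Φ = (z_n - t^{-n+1})·Δ`. -/
def PhiOp (qp tp : F) (n : ℕ) (f : (ℕ → F) → F) : (ℕ → F) → F := fun z =>
  (z n - tp ^ (1 - (n:ℤ))) * f (deltaPt qp n z)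

/-- The operator product `H_a H_{a+1} ⋯ H_b` (the identity when `a > b`). -/
def Hprod (tp : F) (a b : ℕ) (f : (ℕ → F) → F) : (ℕ → F) → F :=
  (List.range' a (b + 1 - a)).foldr (fun j g => HOp tp j g) f

/-- The operator `Z̃_i = H_i ⋯ H_{n-1} Φ H_1 ⋯ H_{i-1}`. -/
def Ztilde (qp tp : F) (n i : ℕ) (f : (ℕ → F) → F) : (ℕ → F) → F :=
  Hprod tp i (n-1) (PhiOp qp tp n (Hprod tp 1 (i-1) f))

/-- The Cherednik operator `Ξ_i = z_i⁻¹ + z_i⁻¹ H_i ⋯ H_{n-1} Φ H_1 ⋯ H_{i-1}`. -/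
def XiOp (qp tp : F) (n i : ℕ) (f : (ℕ → F) → F) : (ℕ → F) → F := fun z =>
  (z i)⁻¹ * f z + (z i)⁻¹ * Ztilde qp tp n i f z

/-- The operator product `Ξ_1 ⋯ Ξ̂_i ⋯ Ξ_n` (with `Ξ_i` omitted). -/
def XiProdOmit (qp tp : F) (n i : ℕ) (f : (ℕ → F) → F) : (ℕ → F) → F :=
  ((List.range' 1 n).filter (fun j => j ≠ i)).foldr (fun j g => XiOp qp tp n j g) f

/-- The operator `Z_i = t^{-binom(n,2)} (z_i Ξ_i - 1) Ξ_1 ⋯ Ξ̂_i ⋯ Ξ_n`. -/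
def ZOp (qp tp : F) (n i : ℕ) (f : (ℕ → F) → F) : (ℕ → F) → F := fun z =>
  tp ^ (-((n * (n-1) / 2 : ℕ) : ℤ)) *
    (z i * XiOp qp tp n i (XiProdOmit qp tp n i f) z - XiProdOmit qp tp n i f z)

/-- A `qp`-generic point: the quantities `z_i qp^a` (for `1 ≤ i ≤ n`, `a ∈ ℕ`) are
pairwise distinct.  All the rational operations occurring in the operators above are
defined at such points. -/
def Generic (qp : F) (n : ℕ) (z : ℕ → F) : Prop :=
  ∀ i ∈ Finset.Icc 1 n, ∀ j ∈ Finset.Icc 1 n, ∀ a b : ℕ,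
    (i ≠ j ∨ a ≠ b) → z i * qp ^ a ≠ z j * qp ^ b

/-- The Demazure-Lusztig operator `T_i`. -/
def TOp (tp : F) (i : ℕ) (f : (ℕ → F) → F) : (ℕ → F) → F := fun z =>
  tp * f z + (tp * z i - z (i+1)) / (z i - z (i+1)) * (f (swapPt i (i+1) z) - f z)

/-- The inverse Demazure-Lusztig operator `T_i⁻¹ = t⁻¹ - 1 + t⁻¹ T_i`. -/
def TinvOp (tp : F) (i : ℕ) (f : (ℕ → F) → F) : (ℕ → F) → F := fun z =>
  (tp⁻¹ - 1) * f z + tp⁻¹ * TOp tp i f z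

/-- The point obtained from `z` by the `q`-shift `z_1 ↦ q z_1`. -/
def tauPt (qp : F) (z : ℕ → F) : ℕ → F := fun k => if k = 1 then qp * z 1 else z k

/-- The operator `ω = s_{n-1} ⋯ s_1 τ_1`. -/
def omegaOp (qp : F) (n : ℕ) (f : (ℕ → F) → F) : (ℕ → F) → F :=
  (List.range' 1 (n-1)).foldl (fun g j => sOp j g) (fun z => f (tauPt qp z))

/-- The operator product `T_a T_{a+1} ⋯ T_b` (identity when `a > b`). -/
def Tprod (tp : F) (a b : ℕ) (f : (ℕ → F) → F) : (ℕ → F) → F :=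
  (List.range' a (b + 1 - a)).foldr (fun j g => TOp tp j g) f

/-- The operator product `T_a⁻¹ T_{a+1}⁻¹ ⋯ T_b⁻¹` (identity when `a > b`). -/
def TinvProd (tp : F) (a b : ℕ) (f : (ℕ → F) → F) : (ℕ → F) → F :=
  (List.range' a (b + 1 - a)).foldr (fun j g => TinvOp tp j g) f

/-- The Cherednik operator `Y_i = t^{-n+1} T_i ⋯ T_{n-1} ω T_1⁻¹ ⋯ T_{i-1}⁻¹`. -/
def YOp (qp tp : F) (n i : ℕ) (f : (ℕ → F) → F) : (ℕ → F) → F := fun z =>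
  tp ^ (1 - (n:ℤ)) * Tprod tp i (n-1) (omegaOp qp n (TinvProd tp 1 (i-1) f)) z

/-- Strict dominance order on compositions (restricted to the window `[1,n]`). -/
def domlt (n : ℕ) (μ η : ℕ → ℕ) : Prop :=
  (∃ i ∈ Finset.Icc 1 n, μ i ≠ η i) ∧
    ∀ p ∈ Finset.Icc 1 n, ∑ i ∈ Finset.Icc 1 p, μ i ≤ ∑ i ∈ Finset.Icc 1 p, η i

/-- `sortDesc n μ` is `μ⁺`, the decreasing rearrangement of `(μ_1,…,μ_n)` (1-based). -/
def sortDesc (n : ℕ) (μ : ℕ → ℕ) : ℕ → ℕ := fun i =>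
  ((((Finset.Icc 1 n).val.map μ).sort (· ≤ ·)).reverse).getD (i - 1) 0

/-- The partial order `≺` on compositions: `μ ≺ η` iff `μ⁺ < η⁺`, or `μ⁺ = η⁺` and `μ < η`. -/
def precOrd (n : ℕ) (μ η : ℕ → ℕ) : Prop :=
  domlt n (sortDesc n μ) (sortDesc n η) ∨
    ((∀ i ∈ Finset.Icc 1 n, sortDesc n μ i = sortDesc n η i) ∧ domlt n μ η)

/-- `P` is the nonsymmetric Macdonald polynomial `E_η(z; qp, tp)`:
it is of the monic triangular form `z^η + Σ_{ν ≺ η} b_{ην} z^ν` and satisfies the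
eigenvalue equations `Y_i P = η̄_i P` (stated at generic points). -/
def IsNSMac (qp tp : F) (n : ℕ) (η : ℕ → ℕ) (P : MvPolynomial ℕ F) : Prop :=
  P.coeff (truncFinsupp n η) = 1 ∧
  (∀ ν : ℕ →₀ ℕ, P.coeff ν ≠ 0 → ν = truncFinsupp n η ∨
    (IsComp n (fun j => ν j) ∧ wt n (fun j => ν j) = wt n η ∧ precOrd n (fun j => ν j) η)) ∧
  (∀ i ∈ Finset.Icc 1 n, ∀ z : ℕ → F, Generic qp n z →
    YOp qp tp n i (fun w => MvPolynomial.eval w P) z = spec qp tp n η i * MvPolynomial.eval z P)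

/-- `P` is the nonsymmetric interpolation Macdonald polynomial `E*_η(z;q,t)`:
a polynomial in `z_1,…,z_n` of total degree `≤ |η|`, with coefficient `1` on `z^η`,
vanishing at the spectral vectors `μ̄` of all compositions `μ ≠ η` with `|μ| ≤ |η|`. -/
def IsInterp (n : ℕ) (η : ℕ → ℕ) (P : MvPolynomial ℕ F) : Prop :=
  P.totalDegree ≤ wt n η ∧
  P.coeff (truncFinsupp n η) = 1 ∧
  (∀ ν : ℕ →₀ ℕ, P.coeff ν ≠ 0 → IsComp n (fun j => ν j)) ∧
  ∀ μ : ℕ → ℕ, IsComp n μ → wt n μ ≤ wt n η → truncFinsupp n μ ≠ truncFinsupp n η →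
    MvPolynomial.eval (spec q t n μ) P = 0

/-- The least element `t_1` of a finite set `I`. -/
def fmin (I : Finset ℕ) : ℕ := if h : I.Nonempty then I.min' h else 0

/-- The greatest element `t_s` of a finite set `I`. -/
def fmax (I : Finset ℕ) : ℕ := if h : I.Nonempty then I.max' h else 0

/-- The least element of `I` greater than `j`. -/
def succI (I : Finset ℕ) (j : ℕ) : ℕ := fmin (I.filter (fun k => j < k))

/-- The greatest element of `I` smaller than `j`. -/
def predI (I : Finset ℕ) (j : ℕ) : ℕ := fmax (I.filter (fun k => k < j))

/-- `â(x,y) = (t-1)x/(x-y)`. -/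
def ahat (tp x y : F) : F := (tp - 1) * x / (x - y)

/-- `b̂(x,y) = (x-ty)/(x-y)`. -/
def bhat (tp x y : F) : F := (x - tp * y) / (x - y)

/-- `A_I(z) = â(z_{t_s}/q, z_{t_1}) ∏_{u=1}^{s-1} â(z_{t_u}, z_{t_{u+1}})`. -/
def AI (qp tp : F) (I : Finset ℕ) (z : ℕ → F) : F :=
  ahat tp (z (fmax I) / qp) (z (fmin I)) *
    (((I.sort (· ≤ ·)).zip (I.sort (· ≤ ·)).tail).map (fun p => ahat tp (z p.1) (z p.2))).prod

/-- `B_I(z)`. -/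
def BI (qp tp : F) (n : ℕ) (I : Finset ℕ) (z : ℕ → F) : F :=
  (z (fmax I) - tp ^ (1 - (n:ℤ))) *
    (∏ j ∈ (Finset.Icc 1 n).filter (fun j => j < fmin I), bhat tp (z (fmax I) / qp) (z j)) *
    (∏ j ∈ (Finset.Icc 1 n).filter (fun j => j ∉ I ∧ fmin I < j), bhat tp (z (predI I j)) (z j))

/-- `χ_I^{(i)}(z)`. -/
def chiI (qp tp : F) (I : Finset ℕ) (i : ℕ) (z : ℕ → F) : F :=
  if i = fmin I then (ahat tp (z (fmax I) / qp) (z i))⁻¹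
  else (ahat tp (z (predI I i)) (z i))⁻¹

/-- `r_I^{(i)}(z) = χ_I^{(i)}(z) A_I(z) B_I(z)`. -/
def rI (qp tp : F) (n : ℕ) (I : Finset ℕ) (i : ℕ) (z : ℕ → F) : F :=
  chiI qp tp I i z * AI qp tp I z * BI qp tp n I z

/-- The point `Iz`. -/
def Ipt (qp : F) (I : Finset ℕ) (z : ℕ → F) : ℕ → F := fun j =>
  if j = fmin I then z (fmax I) / qp
  else if j ∈ I then z (predI I j)
  else z j

/-- `B̃_I(z)`. -/
def BtildeI (qp tp : F) (n : ℕ) (I : Finset ℕ) (z : ℕ → F) : F :=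
  (qp * z (fmin I) - tp ^ (1 - (n:ℤ))) *
    (∏ j ∈ (Finset.Icc 1 n).filter (fun j => j ∉ I ∧ j < fmax I), bhat tp (z (succI I j)) (z j)) *
    (∏ j ∈ (Finset.Icc 1 n).filter (fun j => fmax I < j), bhat tp (qp * z (fmin I)) (z j))

/-- `χ̃_I^{(i)}(z)`. -/
def chitildeI (qp tp : F) (I : Finset ℕ) (i : ℕ) (z : ℕ → F) : F :=
  if i = fmax I then z i / ahat tp (z i) (qp * z (fmin I))
  else z i / ahat tp (z i) (z (succI I i))

/-- The composition `c_I(η)`. -/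
def cIfun (I : Finset ℕ) (η : ℕ → ℕ) : ℕ → ℕ := fun j =>
  if j = fmax I then η (fmin I) + 1
  else if j ∈ I then η (succI I j)
  else η j

/-- `I` is maximal with respect to `η`. -/
def MaximalI (n : ℕ) (I : Finset ℕ) (η : ℕ → ℕ) : Prop :=
  (∀ j ∈ Finset.Icc 1 n, j ∉ I → j < fmax I → η j ≠ η (succI I j)) ∧
  (∀ j ∈ Finset.Icc 1 n, fmax I < j → η j ≠ η (fmin I) + 1)

/-- `I` is comaximal with respect to `lam`. -/
def CoMaximalI (n : ℕ) (I : Finset ℕ) (lam : ℕ → ℕ) : Prop :=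
  (∀ j ∈ Finset.Icc 1 n, j ∉ I → fmin I < j → lam j ≠ lam (predI I j)) ∧
  (∀ j ∈ Finset.Icc 1 n, j < fmin I → lam j ≠ lam (fmax I) - 1) ∧
  lam (fmax I) ≠ 0

/-- `J^I_η`: the collection of nonempty subsets of `{1,…,n}` maximal with respect to `η`. -/
def Jset (n : ℕ) (η : ℕ → ℕ) : Finset (Finset ℕ) :=
  (Finset.Icc 1 n).powerset.filter (fun I => I.Nonempty ∧ MaximalI n I η)

/-- The arm length `a_η(i,j) = η_i - j`. -/
def armF (η : ℕ → ℕ) (i j : ℕ) : ℕ := η i - j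

/-- The leg length `l_η(i,j)`. -/
def legF (n : ℕ) (η : ℕ → ℕ) (i j : ℕ) : ℕ :=
  ((Finset.Icc 1 n).filter fun k => i < k ∧ j ≤ η k ∧ η k ≤ η i).card +
  ((Finset.Icc 1 n).filter fun k => k < i ∧ j ≤ η k + 1 ∧ η k + 1 ≤ η i).card

/-- `d'_η(qp,tp) = ∏_{s ∈ diag(η)} (1 - qp^{a_η(s)+1} tp^{l_η(s)})`. -/
def dprime (qp tp : F) (n : ℕ) (η : ℕ → ℕ) : F :=
  ∏ i ∈ Finset.Icc 1 n, ∏ j ∈ Finset.Icc 1 (η i),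
    (1 - qp ^ (armF η i j + 1) * tp ^ (legF n η i j))

/-- `k_η = (∏_i η̄_i^{η_i}) d'_η(q⁻¹,t⁻¹)`. -/
def kconst (n : ℕ) (η : ℕ → ℕ) : F :=
  (∏ i ∈ Finset.Icc 1 n, spec q t n η i ^ (η i)) * dprime q⁻¹ t⁻¹ n η

/-- The Pieri coefficient `a_{η,c_I(η)}`. -/
def acoef (n : ℕ) (η : ℕ → ℕ) (I : Finset ℕ) : F :=
  -((q - 1) * dprime q⁻¹ t⁻¹ n η * AI q t I (spec q t n η) * BtildeI q t n I (spec q t n η)) /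
    (q ^ (η (fmin I) + 1) * (t - 1) * dprime q⁻¹ t⁻¹ n (cIfun I η))

/-- The tuples `(v_1,…,v_n)` of nonnegative integers with `v_1 + ⋯ + v_n = m`. -/
def compTuples (n m : ℕ) : Finset (Fin n → ℕ) :=
  (Fintype.piFinset fun _ => Finset.range (m + 1)).filter (fun v => ∑ i, v i = m)

/-- The (1-based) composition associated with a tuple `v : Fin n → ℕ`. -/
def ofFin (n : ℕ) (v : Fin n → ℕ) : ℕ → ℕ := fun j =>
  if h : 1 ≤ j ∧ j - 1 < n then v ⟨j - 1, h.2⟩ else 0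
section HExpand

/-- The "carried value" at step `j` when expanding `H_k ⋯ H_m` with identity-set `K`. -/
def carA (k : ℕ) (K : Finset ℕ) (w : ℕ → F) (j : ℕ) : F :=
  if h : (K.filter (· < j)).Nonempty then w ((K.filter (· < j)).max' h + 1) else w k

/-- The point reached when expanding `H_k ⋯ H_m` with identity-set `K`. -/
def ptA (k m : ℕ) (K : Finset ℕ) (w : ℕ → F) : ℕ → F := fun j =>
  if k ≤ j ∧ j ≤ m + 1 then
    (if j ∈ K ∨ j = m + 1 then carA k K w j else w (j+1))
  else w j

/-- The coefficient attached to the identity-set `K` when expanding `H_k ⋯ H_m`. -/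
def cA (tp : F) (k m : ℕ) (K : Finset ℕ) (w : ℕ → F) : F :=
  ∏ j ∈ Finset.Icc k m,
    (if j ∈ K then ahat tp (carA k K w j) (w (j+1)) else bhat tp (carA k K w j) (w (j+1)))

lemma swapPt_other {i j x : ℕ} (hi : x ≠ i) (hj : x ≠ j) (z : ℕ → F) :
    swapPt i j z x = z x := by simp [swapPt, hi, hj]

lemma ptA_out {k m : ℕ} {K : Finset ℕ} {w : ℕ → F} {j : ℕ} (h : ¬(k ≤ j ∧ j ≤ m + 1)) :
    ptA k m K w j = w j := by simp only [ptA]; rw [if_neg h]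

lemma ptA_car {k m : ℕ} {K : Finset ℕ} {w : ℕ → F} {j : ℕ} (h1 : k ≤ j) (h2 : j ≤ m + 1)
    (h3 : j ∈ K ∨ j = m + 1) : ptA k m K w j = carA k K w j := by
  simp only [ptA]; rw [if_pos ⟨h1, h2⟩, if_pos h3]

lemma ptA_mid {k m : ℕ} {K : Finset ℕ} {w : ℕ → F} {j : ℕ} (h1 : k ≤ j) (h2 : j ≤ m + 1)
    (h3 : ¬(j ∈ K ∨ j = m + 1)) : ptA k m K w j = w (j+1) := by
  simp only [ptA]; rw [if_pos ⟨h1, h2⟩, if_neg h3]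

lemma carA_empty {k : ℕ} {K : Finset ℕ} {w : ℕ → F} {j : ℕ}
    (h : ¬(K.filter (· < j)).Nonempty) : carA k K w j = w k := by
  simp only [carA]; rw [dif_neg h]

lemma carA_max {k : ℕ} {K : Finset ℕ} {w : ℕ → F} {j : ℕ}
    (h : (K.filter (· < j)).Nonempty) :
    carA k K w j = w ((K.filter (· < j)).max' h + 1) := by
  simp only [carA]; rw [dif_pos h]

lemma carA_self {k : ℕ} {K : Finset ℕ} (hK : ∀ x ∈ K, k ≤ x) (w : ℕ → F) :
    carA k K w k = w k := by
  apply carA_empty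
  rw [Finset.not_nonempty_iff_eq_empty]
  apply Finset.filter_eq_empty_iff.2
  intro x hx
  simp only [not_lt]
  exact hK x hx

lemma carA_insert {k : ℕ} {K : Finset ℕ} (hK : ∀ x ∈ K, k + 1 ≤ x) (w : ℕ → F) {j : ℕ}
    (hj : k + 1 ≤ j) : carA k (insert k K) w j = carA (k+1) K w j := by
  have hfil : (insert k K).filter (· < j) = insert k (K.filter (· < j)) := by
    rw [Finset.filter_insert, if_pos (show k < j by omega)]
  by_cases h : (K.filter (· < j)).Nonempty
  · have h' : ((insert k K).filter (· < j)).Nonempty := by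
      rw [hfil]; exact Finset.insert_nonempty _ _
    rw [carA_max h', carA_max h]
    congr 2
    obtain ⟨x, hx⟩ := h
    have hx1 : x ∈ K := (Finset.mem_filter.1 hx).1
    have hxk : k ≤ x := by have := hK x hx1; omega
    have hmax : k ≤ (K.filter (· < j)).max' ⟨x, hx⟩ :=
      le_trans hxk (Finset.le_max' _ _ hx)
    have : ((insert k K).filter (· < j)).max' h' =
        (insert k (K.filter (· < j))).max' (by rw [← hfil]; exact h') := by
      congr 1
    rw [this, Finset.max'_insert]
    exact max_eq_right hmax
  · have he : K.filter (· < j) = ∅ := Finset.not_nonempty_iff_eq_empty.1 h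
    have hfil' : (insert k K).filter (· < j) = {k} := by rw [hfil, he]; rfl
    have h' : ((insert k K).filter (· < j)).Nonempty := by
      rw [hfil']; exact Finset.singleton_nonempty k
    rw [carA_max h', carA_empty h]
    congr 1
    have : ((insert k K).filter (· < j)).max' h' = ({k} : Finset ℕ).max' (by
      rw [← hfil']; exact h') := by congr 1
    rw [this, Finset.max'_singleton]

lemma carA_shift {k : ℕ} {K : Finset ℕ} (hK : ∀ x ∈ K, k + 1 ≤ x) (w : ℕ → F) {j : ℕ}
    (hj : k + 1 ≤ j) : carA k K w j = carA (k+1) K (swapPt k (k+1) w) j := by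
  by_cases h : (K.filter (· < j)).Nonempty
  · rw [carA_max h, carA_max h]
    have hx : (K.filter (· < j)).max' h ∈ K :=
      (Finset.mem_filter.1 ((K.filter (· < j)).max'_mem h)).1
    have h1 : (K.filter (· < j)).max' h + 1 ≠ k := by have := hK _ hx; omega
    have h2 : (K.filter (· < j)).max' h + 1 ≠ k + 1 := by have := hK _ hx; omega
    rw [swapPt_other h1 h2]
  · rw [carA_empty h, carA_empty h]
    simp [swapPt]

lemma cA_insert {tp : F} {k m : ℕ} (hk : k ≤ m) {K : Finset ℕ} (hK : ∀ x ∈ K, k + 1 ≤ x)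
    (w : ℕ → F) :
    cA tp k m (insert k K) w = ahat tp (w k) (w (k+1)) * cA tp (k+1) m K w := by
  have hIcc : Finset.Icc k m = insert k (Finset.Icc (k+1) m) := by
    ext x; simp only [Finset.mem_Icc, Finset.mem_insert]; omega
  have hknot : k ∉ Finset.Icc (k+1) m := by simp
  have hins : ∀ x ∈ insert k K, k ≤ x := by
    intro x hx
    rcases Finset.mem_insert.1 hx with h | h
    · omega
    · exact le_of_lt (hK x h)
  unfold cA
  rw [hIcc, Finset.prod_insert hknot]
  congr 1
  · rw [if_pos (Finset.mem_insert_self _ _), carA_self hins w]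
  · apply Finset.prod_congr rfl
    intro j hj
    have hj1 : k + 1 ≤ j := (Finset.mem_Icc.1 hj).1
    rw [carA_insert hK w hj1]
    by_cases hjK : j ∈ K
    · rw [if_pos hjK, if_pos (Finset.mem_insert_of_mem hjK)]
    · rw [if_neg hjK, if_neg (fun hc => by
        rcases Finset.mem_insert.1 hc with h | h
        · omega
        · exact hjK h)]

lemma cA_shift {tp : F} {k m : ℕ} (hk : k ≤ m) {K : Finset ℕ} (hK : ∀ x ∈ K, k + 1 ≤ x)
    (hKk : k ∉ K) (w : ℕ → F) :
    cA tp k m K w = bhat tp (w k) (w (k+1)) * cA tp (k+1) m K (swapPt k (k+1) w) := by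
  have hIcc : Finset.Icc k m = insert k (Finset.Icc (k+1) m) := by
    ext x; simp only [Finset.mem_Icc, Finset.mem_insert]; omega
  have hknot : k ∉ Finset.Icc (k+1) m := by simp
  unfold cA
  rw [hIcc, Finset.prod_insert hknot]
  congr 1
  · rw [if_neg hKk, carA_self (fun x hx => le_of_lt (hK x hx)) w]
  · apply Finset.prod_congr rfl
    intro j hj
    have hj1 : k + 1 ≤ j := (Finset.mem_Icc.1 hj).1
    rw [← carA_shift hK w hj1, swapPt_other (by omega : j + 1 ≠ k) (by omega : j + 1 ≠ k + 1)]

lemma ptA_insert {k m : ℕ} (hk : k ≤ m) {K : Finset ℕ} (hK : ∀ x ∈ K, k + 1 ≤ x) (w : ℕ → F) :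
    ptA k m (insert k K) w = ptA (k+1) m K w := by
  have hins : ∀ x ∈ insert k K, k ≤ x := by
    intro x hx
    rcases Finset.mem_insert.1 hx with h | h
    · omega
    · exact le_of_lt (hK x h)
  funext j
  by_cases h1 : k ≤ j ∧ j ≤ m + 1
  · by_cases h2 : j = k
    · subst h2
      rw [ptA_car h1.1 h1.2 (Or.inl (Finset.mem_insert_self _ _)), carA_self hins w,
        ptA_out (by omega)]
    · have hj1 : k + 1 ≤ j := by omega
      by_cases h3 : j ∈ K ∨ j = m + 1
      · have h3' : j ∈ insert k K ∨ j = m + 1 := by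
          rcases h3 with h | h
          · exact Or.inl (Finset.mem_insert_of_mem h)
          · exact Or.inr h
        rw [ptA_car h1.1 h1.2 h3', ptA_car hj1 h1.2 h3, carA_insert hK w hj1]
      · have h3' : ¬(j ∈ insert k K ∨ j = m + 1) := by
          rintro (h | h)
          · rcases Finset.mem_insert.1 h with h' | h'
            · omega
            · exact h3 (Or.inl h')
          · exact h3 (Or.inr h)
        rw [ptA_mid h1.1 h1.2 h3', ptA_mid hj1 h1.2 h3]
  · rw [ptA_out h1, ptA_out (by omega)]

lemma ptA_shift {k m : ℕ} (hk : k ≤ m) {K : Finset ℕ} (hK : ∀ x ∈ K, k + 1 ≤ x) (w : ℕ → F) :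
    ptA k m K w = ptA (k+1) m K (swapPt k (k+1) w) := by
  funext j
  by_cases h1 : k ≤ j ∧ j ≤ m + 1
  · by_cases h2 : j = k
    · subst h2
      have hnot : ¬ (j ∈ K ∨ j = m + 1) := by
        rintro (h | h)
        · have := hK _ h; omega
        · omega
      rw [ptA_mid h1.1 h1.2 hnot, ptA_out (by omega)]
      simp [swapPt]
    · have hj1 : k + 1 ≤ j := by omega
      by_cases h3 : j ∈ K ∨ j = m + 1
      · rw [ptA_car h1.1 h1.2 h3, ptA_car hj1 h1.2 h3, carA_shift hK w hj1]
      · rw [ptA_mid h1.1 h1.2 h3, ptA_mid hj1 h1.2 h3,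
          swapPt_other (by omega : j + 1 ≠ k) (by omega : j + 1 ≠ k + 1)]
  · rw [ptA_out h1, ptA_out (by omega),
      swapPt_other (by omega : j ≠ k) (by omega : j ≠ k + 1)]

lemma hprod_nil {tp : F} {k m : ℕ} (h : m < k) (g : (ℕ → F) → F) : Hprod tp k m g = g := by
  unfold Hprod
  rw [(by omega : m + 1 - k = 0)]
  rfl

lemma hprod_cons {tp : F} {k m : ℕ} (h : k ≤ m) (g : (ℕ → F) → F) :
    Hprod tp k m g = HOp tp k (Hprod tp (k+1) m g) := by
  unfold Hprod
  rw [(by omega : m + 1 - k = (m - k) + 1), List.range'_succ,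
    (by omega : m + 1 - (k+1) = m - k)]
  rfl

lemma ptA_base {k m : ℕ} (h : m < k) (w : ℕ → F) : ptA k m ∅ w = w := by
  funext j
  by_cases h1 : k ≤ j ∧ j ≤ m + 1
  · have hj : j = k ∧ j = m + 1 := by omega
    rw [ptA_car h1.1 h1.2 (Or.inr hj.2), carA_empty (by simp), hj.1]
  · rw [ptA_out h1]

lemma hprod_expand_base {tp : F} {k m : ℕ} (h : m < k) (g : (ℕ → F) → F) (w : ℕ → F) :
    Hprod tp k m g w = ∑ K ∈ (Finset.Icc k m).powerset, cA tp k m K w * g (ptA k m K w) := by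
  rw [hprod_nil h, Finset.Icc_eq_empty (by omega), Finset.powerset_empty,
    Finset.sum_singleton, ptA_base h]
  unfold cA
  rw [Finset.Icc_eq_empty (by omega), Finset.prod_empty, one_mul]

lemma hprod_expand (tp : F) (g : (ℕ → F) → F) (m : ℕ) :
    ∀ k w, Hprod tp k m g w
      = ∑ K ∈ (Finset.Icc k m).powerset, cA tp k m K w * g (ptA k m K w) := by
  suffices H : ∀ d k w, m + 1 - k ≤ d → Hprod tp k m g w
      = ∑ K ∈ (Finset.Icc k m).powerset, cA tp k m K w * g (ptA k m K w) by
    exact fun k w => H (m + 1 - k) k w le_rfl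
  intro d
  induction d with
  | zero => intro k w h; exact hprod_expand_base (by omega) g w
  | succ d ih =>
    intro k w h
    by_cases hk : k ≤ m
    · rw [hprod_cons hk]
      have hexp : HOp tp k (Hprod tp (k+1) m g) w
          = ahat tp (w k) (w (k+1)) * Hprod tp (k+1) m g w
            + bhat tp (w k) (w (k+1)) * Hprod tp (k+1) m g (swapPt k (k+1) w) := rfl
      rw [hexp, ih (k+1) w (by omega), ih (k+1) (swapPt k (k+1) w) (by omega),
        Finset.mul_sum, Finset.mul_sum]
      have hIcc : Finset.Icc k m = insert k (Finset.Icc (k+1) m) := by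
        ext x; simp only [Finset.mem_Icc, Finset.mem_insert]; omega
      rw [hIcc, Finset.sum_powerset_insert (by simp : k ∉ Finset.Icc (k+1) m)]
      rw [add_comm]
      congr 1
      · apply Finset.sum_congr rfl
        intro K hK
        have hKsub := Finset.mem_powerset.1 hK
        have hKlb : ∀ x ∈ K, k + 1 ≤ x := fun x hx => (Finset.mem_Icc.1 (hKsub hx)).1
        have hKk : k ∉ K := fun hc => by have := hKlb k hc; omega
        rw [cA_shift hk hKlb hKk w, ptA_shift hk hKlb w, mul_assoc]
      · apply Finset.sum_congr rfl
        intro K hK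
        have hKsub := Finset.mem_powerset.1 hK
        have hKlb : ∀ x ∈ K, k + 1 ≤ x := fun x hx => (Finset.mem_Icc.1 (hKsub hx)).1
        rw [cA_insert hk hKlb w, ptA_insert hk hKlb w, mul_assoc]
    · exact hprod_expand_base (by omega) g w

end HExpand
section Basics

lemma fmin_eq {I : Finset ℕ} (h : I.Nonempty) : fmin I = I.min' h := by
  unfold fmin; rw [dif_pos h]

lemma fmax_eq {I : Finset ℕ} (h : I.Nonempty) : fmax I = I.max' h := by
  unfold fmax; rw [dif_pos h]

lemma fmin_mem {I : Finset ℕ} (h : I.Nonempty) : fmin I ∈ I := by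
  rw [fmin_eq h]; exact I.min'_mem h

lemma fmax_mem {I : Finset ℕ} (h : I.Nonempty) : fmax I ∈ I := by
  rw [fmax_eq h]; exact I.max'_mem h

lemma fmin_le {I : Finset ℕ} (h : I.Nonempty) {x : ℕ} (hx : x ∈ I) : fmin I ≤ x := by
  rw [fmin_eq h]; exact I.min'_le x hx

lemma le_fmax {I : Finset ℕ} (h : I.Nonempty) {x : ℕ} (hx : x ∈ I) : x ≤ fmax I := by
  rw [fmax_eq h]; exact I.le_max' x hx

lemma predI_eq {I : Finset ℕ} {j : ℕ} (h : (I.filter (fun k => k < j)).Nonempty) :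
    predI I j = (I.filter (fun k => k < j)).max' h := by
  unfold predI fmax; rw [dif_pos h]

lemma predI_mem {I : Finset ℕ} {j : ℕ} (h : (I.filter (fun k => k < j)).Nonempty) :
    predI I j ∈ I ∧ predI I j < j := by
  rw [predI_eq h]
  have := (I.filter (fun k => k < j)).max'_mem h
  exact ⟨(Finset.mem_filter.1 this).1, (Finset.mem_filter.1 this).2⟩

lemma le_predI {I : Finset ℕ} {j : ℕ} (h : (I.filter (fun k => k < j)).Nonempty)
    {x : ℕ} (hx : x ∈ I) (hxj : x < j) : x ≤ predI I j := by
  rw [predI_eq h]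
  exact Finset.le_max' _ _ (show x ∈ I.filter (fun k => k < j) from Finset.mem_filter.2 ⟨hx, hxj⟩)

lemma max'_congr {S S' : Finset ℕ} (h : S.Nonempty) (e : S = S') :
    S.max' h = S'.max' (e ▸ h) := by subst e; rfl

lemma t_ne_one : (t : F) ≠ 1 := by
  intro h
  have hinj := IsFractionRing.injective (MvPolynomial (Fin 2) ℚ) F
  have h1 : (algebraMap (MvPolynomial (Fin 2) ℚ) F) (MvPolynomial.X 1) =
      (algebraMap (MvPolynomial (Fin 2) ℚ) F) 1 := by
    rw [map_one]; exact h
  have h2 := hinj h1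
  have := congrArg (MvPolynomial.eval (fun _ => (0:ℚ))) h2
  simp at this

lemma q_ne_zero : (q : F) ≠ 0 := by
  intro h
  have hinj := IsFractionRing.injective (MvPolynomial (Fin 2) ℚ) F
  have h1 : (algebraMap (MvPolynomial (Fin 2) ℚ) F) (MvPolynomial.X 0) =
      (algebraMap (MvPolynomial (Fin 2) ℚ) F) 0 := by
    rw [map_zero]; exact h
  have h2 := hinj h1
  have := congrArg (MvPolynomial.eval (fun _ => (1:ℚ))) h2
  simp at this

lemma ahat_ne_zero {x y : F} (hx : x ≠ 0) (hxy : x ≠ y) : ahat t x y ≠ 0 := by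
  unfold ahat
  apply div_ne_zero
  · exact mul_ne_zero (sub_ne_zero.2 t_ne_one) hx
  · exact sub_ne_zero.2 hxy

end Basics

section ZipProd

lemma sort_min_cons {I : Finset ℕ} (h : I.Nonempty) :
    I.sort (· ≤ ·) = I.min' h :: (I.erase (I.min' h)).sort (· ≤ ·) := by
  apply List.Perm.eq_of_pairwise' (r := (· ≤ ·))
  · exact Finset.pairwise_sort _ _
  · rw [List.pairwise_cons]
    refine ⟨?_, Finset.pairwise_sort _ _⟩
    intro b hb
    exact I.min'_le b (Finset.mem_of_mem_erase ((Finset.mem_sort _).1 hb))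
  · rw [← Multiset.coe_eq_coe, ← Multiset.cons_coe, Finset.sort_eq, Finset.sort_eq]
    have h3 : insert (I.min' h) (I.erase (I.min' h)) = I :=
      Finset.insert_erase (I.min'_mem h)
    conv_lhs => rw [← h3]
    rw [Finset.insert_val_of_notMem (Finset.notMem_erase _ _)]

lemma predI_of_two {I : Finset ℕ} {a b : ℕ} (ha : a ∈ I) (hab : a < b)
    (hmax : ∀ x ∈ I, x < b → x ≤ a) : predI I b = a := by
  have hne : (I.filter (fun k => k < b)).Nonempty :=
    ⟨a, show a ∈ I.filter (fun k => k < b) from Finset.mem_filter.2 ⟨ha, hab⟩⟩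
  rw [predI_eq hne]
  apply le_antisymm
  · apply Finset.max'_le
    intro x hx
    exact hmax x (Finset.mem_filter.1 hx).1 (Finset.mem_filter.1 hx).2
  · exact Finset.le_max' _ _ (show a ∈ I.filter (fun k => k < b) from Finset.mem_filter.2 ⟨ha, hab⟩)

lemma zipprod_eq (g : ℕ → ℕ → F) (I : Finset ℕ) :
    (((I.sort (· ≤ ·)).zip (I.sort (· ≤ ·)).tail).map (fun p => g p.1 p.2)).prod
      = ∏ j ∈ I.erase (fmin I), g (predI I j) j := by
  induction I using Finset.strongInduction with
  | _ I ih =>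
    by_cases hne : I.Nonempty
    · set a := I.min' hne with ha
      have hfmin : fmin I = a := fmin_eq hne
      by_cases h1 : I.erase a = ∅
      · have hsing : I = {a} := by
          rcases (Finset.erase_eq_empty_iff I a).1 h1 with h | h
          · exact absurd h (Finset.nonempty_iff_ne_empty.1 hne)
          · exact h
        rw [hfmin, hsing]
        simp
      · have hne' : (I.erase a).Nonempty := Finset.nonempty_of_ne_empty h1
        set b := (I.erase a).min' hne' with hb
        have hbI : b ∈ I := Finset.mem_of_mem_erase ((I.erase a).min'_mem hne')
        have hba : b ≠ a := Finset.ne_of_mem_erase ((I.erase a).min'_mem hne')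
        have haI : a ∈ I := I.min'_mem hne
        have hab : a < b := lt_of_le_of_ne (I.min'_le b hbI) (Ne.symm hba)
        have key : (I.sort (· ≤ ·)).zip (I.sort (· ≤ ·)).tail
            = (a, b) :: ((I.erase a).sort (· ≤ ·)).zip ((I.erase a).sort (· ≤ ·)).tail := by
          rw [sort_min_cons hne, sort_min_cons hne']
          simp
          exact ⟨rfl, rfl⟩
        rw [key, List.map_cons, List.prod_cons, ih (I.erase a) (Finset.erase_ssubset haI)]
        have hfmin' : fmin (I.erase a) = b := fmin_eq hne'
        rw [hfmin, hfmin']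
        have hrestore : I.erase a = insert b ((I.erase a).erase b) :=
          (Finset.insert_erase ((I.erase a).min'_mem hne')).symm
        conv_rhs => rw [hrestore]
        rw [Finset.prod_insert (Finset.notMem_erase _ _)]
        congr 1
        ·
          have : predI I b = a := by
            apply predI_of_two haI hab
            intro x hx hxb
            by_contra hc
            push_neg at hc
            have hxe : x ∈ I.erase a := Finset.mem_erase.2 ⟨by omega, hx⟩
            have := (I.erase a).min'_le x hxe
            omega
          rw [this]
        · apply Finset.prod_congr rfl
          intro j hj
          have hjb : j ≠ b := (Finset.mem_erase.1 hj).1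
          have hje : j ∈ I.erase a := (Finset.mem_erase.1 hj).2
          have hjI : j ∈ I := Finset.mem_of_mem_erase hje
          have hbj : b < j := lt_of_le_of_ne ((I.erase a).min'_le j hje) (Ne.symm hjb)
          have hpe : predI (I.erase a) j = predI I j := by
            have hne1 : ((I.erase a).filter (fun k => k < j)).Nonempty :=
              ⟨b, Finset.mem_filter.2 ⟨(I.erase a).min'_mem hne', hbj⟩⟩
            have hne2 : (I.filter (fun k => k < j)).Nonempty :=
              ⟨b, Finset.mem_filter.2 ⟨hbI, hbj⟩⟩
            rw [predI_eq hne1, predI_eq hne2]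
            apply le_antisymm
            · apply Finset.max'_le
              intro x hx
              obtain ⟨hx1, hx2⟩ := Finset.mem_filter.1 hx
              exact Finset.le_max' _ _
                (show x ∈ I.filter (fun k => k < j) from
                  Finset.mem_filter.2 ⟨Finset.mem_of_mem_erase hx1, hx2⟩)
            · apply Finset.max'_le
              intro x hx
              obtain ⟨hx1, hx2⟩ := Finset.mem_filter.1 hx
              by_cases hxa : x = a
              · have hbm : b ∈ (I.erase a).filter (fun k => k < j) :=
                  Finset.mem_filter.2 ⟨(I.erase a).min'_mem hne', hbj⟩
                have := Finset.le_max' _ _ hbm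
                omega
              · exact Finset.le_max' _ _
                  (show x ∈ (I.erase a).filter (fun k => k < j) from
                    Finset.mem_filter.2 ⟨Finset.mem_erase.2 ⟨hxa, hx1⟩, hx2⟩)
          rw [hpe]
    · have hemp : I = ∅ := Finset.not_nonempty_iff_eq_empty.1 hne
      rw [hemp]
      simp

end ZipProd
section Key

/-- The uniform "previous value" `Y_j` entering the factors of `r_I`. -/
def Yfac (I : Finset ℕ) (z : ℕ → F) (j : ℕ) : F :=
  if (I.filter (fun k => k < j)).Nonempty then z (predI I j) else z (fmax I) / q

/-- The uniform factor attached to the position `j` in the expansion of `r_I`. -/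
def facI (I : Finset ℕ) (z : ℕ → F) (j : ℕ) : F :=
  if j ∈ I then ahat t (Yfac I z j) (z j) else bhat t (Yfac I z j) (z j)

lemma keyI (n i : ℕ) (hn : 2 ≤ n) (hi1 : 1 ≤ i) (hin : i ≤ n)
    (I : Finset ℕ) (hI : I ⊆ Finset.Icc 1 n) (hiI : i ∈ I)
    (f : (ℕ → F) → F) (z : ℕ → F)
    (hz1 : ∀ a ∈ Finset.Icc 1 n, ∀ b ∈ Finset.Icc 1 n, a ≠ b → z a ≠ z b)
    (hz2 : ∀ a ∈ Finset.Icc 1 n, ∀ b ∈ Finset.Icc 1 n, z a ≠ q * z b) :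
    rI q t n I i z * f (Ipt q I z)
      = cA t i (n-1) ((Finset.Icc i (n-1)).filter (fun j => j + 1 ∈ I)) z *
          ((ptA i (n-1) ((Finset.Icc i (n-1)).filter (fun j => j + 1 ∈ I)) z n
              - t ^ (1 - (n:ℤ))) *
            (cA t 1 (i-1) ((Finset.Icc 1 (i-1)).filter (fun j => j ∈ I))
                (deltaPt q n (ptA i (n-1) ((Finset.Icc i (n-1)).filter (fun j => j + 1 ∈ I)) z)) *
              f (ptA 1 (i-1) ((Finset.Icc 1 (i-1)).filter (fun j => j ∈ I))
                (deltaPt q n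
                  (ptA i (n-1) ((Finset.Icc i (n-1)).filter (fun j => j + 1 ∈ I)) z))))) := by
  have hne : I.Nonempty := ⟨i, hiI⟩
  have hIcc : ∀ x ∈ I, 1 ≤ x ∧ x ≤ n := fun x hx => Finset.mem_Icc.1 (hI hx)
  have hfminI : fmin I ∈ I := fmin_mem hne
  have hfmaxI : fmax I ∈ I := fmax_mem hne
  have hfmin_le : ∀ x ∈ I, fmin I ≤ x := fun x hx => fmin_le hne hx
  have hz0 : ∀ a ∈ Finset.Icc 1 n, z a ≠ 0 := by
    intro a ha hc
    exact hz2 a ha a ha (by rw [hc, mul_zero])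
  set LI := (Finset.Icc i (n-1)).filter (fun j => j + 1 ∈ I) with hLI
  set KI := (Finset.Icc 1 (i-1)).filter (fun j => j ∈ I) with hKI
  set u := ptA i (n-1) LI z with hu
  set w' := deltaPt q n u with hw
  -- the carried values in the outer expansion
  have hcarL : ∀ j, i ≤ j → j ≤ n → carA i LI z j = z (predI I (j+1)) := by
    intro j hji hjn
    by_cases h : (LI.filter (· < j)).Nonempty
    · rw [carA_max h]
      obtain ⟨hpL, hpj⟩ := Finset.mem_filter.1 ((LI.filter (· < j)).max'_mem h)
      obtain ⟨hpIcc, hpI⟩ := Finset.mem_filter.1 hpL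
      have hp' := Finset.mem_Icc.1 hpIcc
      have hpred : predI I (j+1) = (LI.filter (· < j)).max' h + 1 := by
        apply predI_of_two hpI (by omega)
        intro x hx hxj
        by_cases hxi : x ≤ i
        · omega
        · have hx1 : x - 1 ∈ LI.filter (· < j) := by
            refine Finset.mem_filter.2 ⟨Finset.mem_filter.2
              ⟨Finset.mem_Icc.2 ⟨by omega, ?_⟩, ?_⟩, ?_⟩
            · have := (hIcc x hx).2; omega
            · rw [(by omega : x - 1 + 1 = x)]; exact hx
            · omega
          have := Finset.le_max' _ _ hx1
          omega
      rw [hpred]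
    · rw [carA_empty h]
      have hpred : predI I (j+1) = i := by
        apply predI_of_two hiI (by omega)
        intro x hx hxj
        by_contra hc
        push_neg at hc
        apply h
        refine ⟨x - 1, Finset.mem_filter.2 ⟨Finset.mem_filter.2
          ⟨Finset.mem_Icc.2 ⟨by omega, ?_⟩, ?_⟩, ?_⟩⟩
        · have := (hIcc x hx).2; omega
        · rw [(by omega : x - 1 + 1 = x)]; exact hx
        · omega
      rw [hpred]
  -- values of u
  have hu_lt : ∀ j, j < i → u j = z j := fun j hj => ptA_out (by omega)
  have hu_gt : ∀ j, n < j → u j = z j := fun j hj => ptA_out (by omega)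
  have hu_n : u n = z (fmax I) := by
    rw [show u n = carA i LI z n from ptA_car (by omega) (by omega) (Or.inr (by omega)),
      hcarL n hin le_rfl]
    have hfe : I.filter (fun k => k < n + 1) = I := by
      apply Finset.filter_true_of_mem
      intro x hx; have := (hIcc x hx).2; omega
    show z (predI I (n+1)) = z (fmax I)
    unfold predI
    rw [hfe]
  have hu_mem : ∀ j, i ≤ j → j + 1 ≤ n → j + 1 ∈ I → u j = z (predI I (j+1)) := by
    intro j h1 h2 h3
    have hjLI : j ∈ LI := by
      rw [hLI]; exact Finset.mem_filter.2 ⟨Finset.mem_Icc.2 ⟨h1, by omega⟩, h3⟩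
    show ptA i (n-1) LI z j = _
    rw [ptA_car h1 (by omega) (Or.inl hjLI), hcarL j h1 (by omega)]
  have hu_nmem : ∀ j, i ≤ j → j + 1 ≤ n → j + 1 ∉ I → u j = z (j+1) := by
    intro j h1 h2 h3
    show ptA i (n-1) LI z j = _
    apply ptA_mid h1 (by omega)
    rintro (h | h)
    · have h' : j ∈ (Finset.Icc i (n-1)).filter (fun j => j + 1 ∈ I) := by rw [← hLI]; exact h
      exact h3 (Finset.mem_filter.1 h').2
    · omega
  -- values of w'
  have hw1 : w' 1 = z (fmax I) / q := by
    show (if (1:ℕ) = 1 then u n / q else if 1 ≤ n then u (1-1) else u 1) = _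
    rw [if_pos rfl, hu_n]
  have hw_mid : ∀ p, p ≠ 1 → p ≤ n → w' p = u (p-1) := by
    intro p h1 h2
    show (if p = 1 then u n / q else if p ≤ n then u (p-1) else u p) = _
    rw [if_neg h1, if_pos h2]
  have hw_gt : ∀ p, n < p → w' p = u p := by
    intro p h1
    show (if p = 1 then u n / q else if p ≤ n then u (p-1) else u p) = _
    rw [if_neg (by omega), if_neg (by omega)]
  -- the carried values in the inner expansion
  have hKfil : ∀ j, j ≤ i → KI.filter (· < j) = I.filter (fun k => k < j) := by
    intro j hj
    ext x
    simp only [hKI, Finset.mem_filter, Finset.mem_Icc]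
    constructor
    · rintro ⟨⟨_, hxI⟩, hxj⟩; exact ⟨hxI, hxj⟩
    · rintro ⟨hxI, hxj⟩
      exact ⟨⟨⟨(hIcc x hxI).1, by omega⟩, hxI⟩, hxj⟩
  have hcarK : ∀ j, 1 ≤ j → j ≤ i → carA 1 KI w' j = Yfac I z j := by
    intro j h1 h2
    by_cases h : (I.filter (fun k => k < j)).Nonempty
    · have h' : (KI.filter (· < j)).Nonempty := by rw [hKfil j h2]; exact h
      rw [carA_max h']
      have hmax : (KI.filter (· < j)).max' h' = predI I j := by
        rw [predI_eq h]
        exact max'_congr h' (hKfil j h2)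
      rw [hmax]
      have hp := predI_mem h
      have hpI := hIcc _ hp.1
      rw [hw_mid (predI I j + 1) (by omega) (by omega),
        (by omega : predI I j + 1 - 1 = predI I j), hu_lt _ (by omega)]
      unfold Yfac
      rw [if_pos h]
    · have h' : ¬ (KI.filter (· < j)).Nonempty := by rw [hKfil j h2]; exact h
      rw [carA_empty h', hw1]
      unfold Yfac
      rw [if_neg h]
  -- the point identity
  have hpt : ptA 1 (i-1) KI w' = Ipt q I z := by
    funext j
    have hIpt : Ipt q I z j
        = if j = fmin I then z (fmax I) / q else if j ∈ I then z (predI I j) else z j := rfl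
    have hfmin1 : 1 ≤ fmin I := (hIcc _ hfminI).1
    rcases lt_trichotomy j i with hj | hj | hj
    · by_cases hj0 : 1 ≤ j
      · by_cases hjI : j ∈ I
        · have hjK : j ∈ KI := Finset.mem_filter.2 ⟨Finset.mem_Icc.2 ⟨hj0, by omega⟩, hjI⟩
          rw [ptA_car hj0 (by omega) (Or.inl hjK), hcarK j hj0 (by omega)]
          unfold Yfac
          by_cases hjf : (I.filter (fun k => k < j)).Nonempty
          · obtain ⟨x, hx⟩ := hjf
            obtain ⟨hx1, hx2⟩ := Finset.mem_filter.1 hx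
            have hxmin := hfmin_le x hx1
            rw [if_pos ⟨x, hx⟩, hIpt, if_neg (by omega), if_pos hjI]
          · have hjmin : j = fmin I := by
              have h1' := hfmin_le j hjI
              have h2' : ¬ fmin I < j := fun hc =>
                hjf ⟨fmin I, Finset.mem_filter.2 ⟨hfminI, hc⟩⟩
              omega
            rw [if_neg hjf, hIpt, if_pos hjmin]
        · have hjK : ¬(j ∈ KI ∨ j = (i-1) + 1) := by
            rintro (h | h)
            · exact hjI (Finset.mem_filter.1 h).2
            · omega
          rw [ptA_mid hj0 (by omega) hjK, hw_mid (j+1) (by omega) (by omega),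
            (by omega : j + 1 - 1 = j), hu_lt j hj, hIpt,
            if_neg (fun h => hjI (by rw [h]; exact hfminI)), if_neg hjI]
      · have hj0' : j = 0 := by omega
        subst hj0'
        rw [ptA_out (by omega), hw_mid 0 (by omega) (by omega),
          (by omega : (0:ℕ) - 1 = 0), hu_lt 0 (by omega), hIpt,
          if_neg (by omega), if_neg (fun hc => by have := (hIcc 0 hc).1; omega)]
    · subst hj
      rw [ptA_car hi1 (by omega) (Or.inr (by omega)), hcarK j hi1 le_rfl]
      unfold Yfac
      by_cases hjf : (I.filter (fun k => k < j)).Nonempty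
      · obtain ⟨x, hx⟩ := hjf
        obtain ⟨hx1, hx2⟩ := Finset.mem_filter.1 hx
        have hxmin := hfmin_le x hx1
        rw [if_pos ⟨x, hx⟩, hIpt, if_neg (by omega), if_pos hiI]
      · have hjmin : j = fmin I := by
          have h1' := hfmin_le j hiI
          have h2' : ¬ fmin I < j := fun hc =>
            hjf ⟨fmin I, Finset.mem_filter.2 ⟨hfminI, hc⟩⟩
          omega
        rw [if_neg hjf, hIpt, if_pos hjmin]
    · by_cases hjn : j ≤ n
      · rw [ptA_out (by omega), hw_mid j (by omega) hjn]
        have hminlt : fmin I ≤ i := hfmin_le i hiI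
        by_cases hjI : j ∈ I
        · rw [hu_mem (j-1) (by omega) (by omega)
            (by rw [(by omega : j - 1 + 1 = j)]; exact hjI),
            (by omega : j - 1 + 1 = j), hIpt, if_neg (by omega), if_pos hjI]
        · rw [hu_nmem (j-1) (by omega) (by omega)
            (by rw [(by omega : j - 1 + 1 = j)]; exact hjI),
            (by omega : j - 1 + 1 = j), hIpt, if_neg (by omega), if_neg hjI]
      · have hminlt : fmin I ≤ i := hfmin_le i hiI
        rw [ptA_out (by omega), hw_gt j (by omega), hu_gt j (by omega), hIpt,
          if_neg (by omega), if_neg (fun hc => by have := (hIcc j hc).2; omega)]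
  -- the outer coefficient
  have hcL : cA t i (n-1) LI z = ∏ j ∈ Finset.Icc (i+1) n, facI I z j := by
    unfold cA
    apply Finset.prod_nbij' (fun j => j + 1) (fun j => j - 1)
    · intro a ha; have := Finset.mem_Icc.1 ha; exact Finset.mem_Icc.2 ⟨by omega, by omega⟩
    · intro a ha; have := Finset.mem_Icc.1 ha; exact Finset.mem_Icc.2 ⟨by omega, by omega⟩
    · intro a ha; omega
    · intro a ha; have := Finset.mem_Icc.1 ha; omega
    · intro a ha
      have ha' := Finset.mem_Icc.1 ha
      have hcar := hcarL a ha'.1 (by omega)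
      have hY : Yfac I z (a+1) = z (predI I (a+1)) := by
        unfold Yfac
        rw [if_pos ⟨i, show i ∈ I.filter (fun k => k < a+1) from
          Finset.mem_filter.2 ⟨hiI, by omega⟩⟩]
      unfold facI
      by_cases hm : a + 1 ∈ I
      · have hmemL : a ∈ LI := by rw [hLI]; exact Finset.mem_filter.2 ⟨ha, hm⟩
        rw [if_pos hmemL, if_pos hm, hcar, hY]
      · have hmemL : a ∉ LI := by rw [hLI]; intro hc; exact hm (Finset.mem_filter.1 hc).2
        rw [if_neg hmemL, if_neg hm, hcar, hY]
  -- the inner coefficient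
  have hcK : cA t 1 (i-1) KI w' = ∏ j ∈ Finset.Icc 1 (i-1), facI I z j := by
    unfold cA
    apply Finset.prod_congr rfl
    intro j hj
    have hj' := Finset.mem_Icc.1 hj
    have hcar := hcarK j hj'.1 (by omega)
    have hwj : w' (j+1) = z j := by
      rw [hw_mid (j+1) (by omega) (by omega), (by omega : j + 1 - 1 = j),
        hu_lt j (by omega)]
    unfold facI
    by_cases hm : j ∈ I
    · have hmemK : j ∈ KI := by rw [hKI]; exact Finset.mem_filter.2 ⟨hj, hm⟩
      rw [if_pos hmemK, if_pos hm, hcar, hwj]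
    · have hmemK : j ∉ KI := by rw [hKI]; intro hc; exact hm (Finset.mem_filter.1 hc).2
      rw [if_neg hmemK, if_neg hm, hcar, hwj]
  -- the nonvanishing of the `i`-th factor
  have hYi_ne : Yfac I z i ≠ 0 ∧ Yfac I z i ≠ z i := by
    unfold Yfac
    by_cases h : (I.filter (fun k => k < i)).Nonempty
    · rw [if_pos h]
      have hp := predI_mem h
      have h1 := hIcc _ hp.1
      constructor
      · exact hz0 _ (Finset.mem_Icc.2 h1)
      · exact hz1 _ (Finset.mem_Icc.2 h1) _ (Finset.mem_Icc.2 ⟨hi1, hin⟩) (by omega)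
    · rw [if_neg h]
      have h1 := hIcc _ hfmaxI
      constructor
      · exact div_ne_zero (hz0 _ (Finset.mem_Icc.2 h1)) q_ne_zero
      · intro hc
        have hc' : z (fmax I) = z i * q := (div_eq_iff q_ne_zero).1 hc
        exact hz2 (fmax I) (Finset.mem_Icc.2 h1) i (Finset.mem_Icc.2 ⟨hi1, hin⟩)
          (by rw [hc', mul_comm])
  have hfac_i_ne : ahat t (Yfac I z i) (z i) ≠ 0 := ahat_ne_zero hYi_ne.1 hYi_ne.2
  -- the expansion of AI
  have hAI : AI q t I z = ∏ j ∈ I, ahat t (Yfac I z j) (z j) := by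
    have hz' : (((I.sort (· ≤ ·)).zip (I.sort (· ≤ ·)).tail).map
        (fun p => ahat t (z p.1) (z p.2))).prod
        = ∏ j ∈ I.erase (fmin I), ahat t (z (predI I j)) (z j) :=
      zipprod_eq (fun x y => ahat t (z x) (z y)) I
    unfold AI
    rw [hz', ← Finset.mul_prod_erase I _ (fmin_mem hne)]
    congr 1
    · unfold Yfac
      rw [if_neg (fun hc => by
        obtain ⟨x, hx⟩ := hc
        obtain ⟨hx1, hx2⟩ := Finset.mem_filter.1 hx
        have := hfmin_le x hx1
        omega)]
    · apply Finset.prod_congr rfl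
      intro j hj
      have hjmin : fmin I < j :=
        lt_of_le_of_ne (hfmin_le j (Finset.mem_of_mem_erase hj))
          (Ne.symm (Finset.mem_erase.1 hj).1)
      unfold Yfac
      rw [if_pos ⟨fmin I, Finset.mem_filter.2 ⟨hfminI, hjmin⟩⟩]
  -- the expansion of BI
  have hBI : BI q t n I z = (z (fmax I) - t ^ (1 - (n:ℤ))) *
      ∏ j ∈ (Finset.Icc 1 n).filter (fun j => j ∉ I), bhat t (Yfac I z j) (z j) := by
    unfold BI
    rw [mul_assoc]
    congr 1
    have hsplit : (Finset.Icc 1 n).filter (fun j => j ∉ I)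
        = ((Finset.Icc 1 n).filter (fun j => j < fmin I))
          ∪ ((Finset.Icc 1 n).filter (fun j => j ∉ I ∧ fmin I < j)) := by
      ext x
      simp only [Finset.mem_filter, Finset.mem_union, Finset.mem_Icc]
      constructor
      · rintro ⟨hx, hxn⟩
        rcases lt_trichotomy x (fmin I) with h | h | h
        · exact Or.inl ⟨hx, h⟩
        · exact absurd (show x ∈ I by rw [h]; exact hfminI) hxn
        · exact Or.inr ⟨hx, hxn, h⟩
      · rintro (⟨hx, h⟩ | ⟨hx, h, _⟩)
        · exact ⟨hx, fun hc => by have := hfmin_le _ hc; omega⟩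
        · exact ⟨hx, h⟩
    rw [hsplit, Finset.prod_union (by
      rw [Finset.disjoint_left]
      intro x hx1 hx2
      have h1 := (Finset.mem_filter.1 hx1).2
      have h2 := (Finset.mem_filter.1 hx2).2.2
      omega)]
    congr 1
    · apply Finset.prod_congr rfl
      intro j hj
      have hjlt := (Finset.mem_filter.1 hj).2
      unfold Yfac
      rw [if_neg (fun hc => by
        obtain ⟨x, hx⟩ := hc
        obtain ⟨hx1, hx2⟩ := Finset.mem_filter.1 hx
        have := hfmin_le x hx1
        omega)]
    · apply Finset.prod_congr rfl
      intro j hj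
      have hjgt := (Finset.mem_filter.1 hj).2.2
      unfold Yfac
      rw [if_pos ⟨fmin I, Finset.mem_filter.2 ⟨hfminI, hjgt⟩⟩]
  -- the expansion of chiI
  have hchi : chiI q t I i z = (ahat t (Yfac I z i) (z i))⁻¹ := by
    unfold chiI Yfac
    by_cases h : i = fmin I
    · rw [if_pos h, if_neg (fun hc => by
        obtain ⟨x, hx⟩ := hc
        obtain ⟨hx1, hx2⟩ := Finset.mem_filter.1 hx
        have := hfmin_le x hx1
        omega)]
    · rw [if_neg h, if_pos ⟨fmin I, Finset.mem_filter.2 ⟨hfminI,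
        lt_of_le_of_ne (hfmin_le i hiI) (fun hc => h hc.symm)⟩⟩]
  -- the expansion of rI
  have hrI : rI q t n I i z
      = (z (fmax I) - t ^ (1 - (n:ℤ))) * ∏ j ∈ (Finset.Icc 1 n).erase i, facI I z j := by
    have hsplit2 : ∏ j ∈ (Finset.Icc 1 n).erase i, facI I z j
        = (∏ j ∈ I.erase i, ahat t (Yfac I z j) (z j)) *
          ∏ j ∈ (Finset.Icc 1 n).filter (fun j => j ∉ I), bhat t (Yfac I z j) (z j) := by
      rw [← Finset.prod_filter_mul_prod_filter_not ((Finset.Icc 1 n).erase i)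
        (fun j => j ∈ I) (facI I z)]
      congr 1
      · have hseteq : ((Finset.Icc 1 n).erase i).filter (fun j => j ∈ I) = I.erase i := by
          ext x
          simp only [Finset.mem_filter, Finset.mem_erase, Finset.mem_Icc]
          constructor
          · rintro ⟨⟨h1, h2⟩, h3⟩; exact ⟨h1, h3⟩
          · rintro ⟨h1, h2⟩; exact ⟨⟨h1, hIcc x h2⟩, h2⟩
        rw [hseteq]
        apply Finset.prod_congr rfl
        intro j hj
        unfold facI
        rw [if_pos (Finset.mem_of_mem_erase hj)]
      · have hseteq : ((Finset.Icc 1 n).erase i).filter (fun j => ¬ j ∈ I)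
            = (Finset.Icc 1 n).filter (fun j => j ∉ I) := by
          ext x
          simp only [Finset.mem_filter, Finset.mem_erase, Finset.mem_Icc]
          constructor
          · rintro ⟨⟨h1, h2⟩, h3⟩; exact ⟨h2, h3⟩
          · rintro ⟨h1, h2⟩; exact ⟨⟨fun hc => h2 (by rw [hc]; exact hiI), h1⟩, h2⟩
        rw [hseteq]
        apply Finset.prod_congr rfl
        intro j hj
        unfold facI
        rw [if_neg (Finset.mem_filter.1 hj).2]
    unfold rI
    rw [hchi, hAI, hBI, hsplit2, ← Finset.mul_prod_erase I _ hiI,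
      inv_mul_cancel_left₀ hfac_i_ne]
    ring
  -- final assembly
  have hsplit3 : (Finset.Icc 1 n).erase i = Finset.Icc 1 (i-1) ∪ Finset.Icc (i+1) n := by
    ext x
    simp only [Finset.mem_erase, Finset.mem_union, Finset.mem_Icc]
    omega
  rw [hrI, ← hpt, hcL, hcK, hu_n, hsplit3, Finset.prod_union (by
    rw [Finset.disjoint_left]
    intro x hx1 hx2
    have h1 := Finset.mem_Icc.1 hx1
    have h2 := Finset.mem_Icc.1 hx2
    omega)]
  ring

end Key

/-- Lemma 2: the expansion of `Z̃_i = H_i ⋯ H_{n-1} Φ H_1 ⋯ H_{i-1}`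
applied to an arbitrary (rational) function:
`Z̃_i f(z) = Σ_{I ⊆ {1,…,n}, i ∈ I} r_I^{(i)}(z) f(Iz)`,
stated at every point where all the rational operations involved are defined. -/
theorem Ztilde_expansion (n : ℕ) (hn : 2 ≤ n) (i : ℕ) (hi : i ∈ Finset.Icc 1 n)
    (f : (ℕ → F) → F) (z : ℕ → F)
    (hz1 : ∀ a ∈ Finset.Icc 1 n, ∀ b ∈ Finset.Icc 1 n, a ≠ b → z a ≠ z b)
    (hz2 : ∀ a ∈ Finset.Icc 1 n, ∀ b ∈ Finset.Icc 1 n, z a ≠ q * z b) :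
    Ztilde q t n i f z =
      ∑ I ∈ (Finset.Icc 1 n).powerset.filter (fun I => i ∈ I),
        rI q t n I i z * f (Ipt q I z) := by
  obtain ⟨hi1, hin⟩ := Finset.mem_Icc.1 hi
  have step1 : Ztilde q t n i f z
      = ∑ L ∈ (Finset.Icc i (n-1)).powerset, cA t i (n-1) L z *
          ((ptA i (n-1) L z n - t ^ (1 - (n:ℤ))) *
           ∑ K ∈ (Finset.Icc 1 (i-1)).powerset,
             cA t 1 (i-1) K (deltaPt q n (ptA i (n-1) L z)) *
               f (ptA 1 (i-1) K (deltaPt q n (ptA i (n-1) L z)))) := by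
    rw [show Ztilde q t n i f z
        = Hprod t i (n-1) (PhiOp q t n (Hprod t 1 (i-1) f)) z from rfl,
      hprod_expand]
    apply Finset.sum_congr rfl
    intro L hL
    congr 1
    rw [show PhiOp q t n (Hprod t 1 (i-1) f) (ptA i (n-1) L z)
        = (ptA i (n-1) L z n - t ^ (1 - (n:ℤ))) *
          Hprod t 1 (i-1) f (deltaPt q n (ptA i (n-1) L z)) from rfl,
      hprod_expand t f (i-1)]
  have step2 : Ztilde q t n i f z
      = ∑ L ∈ (Finset.Icc i (n-1)).powerset, ∑ K ∈ (Finset.Icc 1 (i-1)).powerset,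
          cA t i (n-1) L z *
            ((ptA i (n-1) L z n - t ^ (1 - (n:ℤ))) *
              (cA t 1 (i-1) K (deltaPt q n (ptA i (n-1) L z)) *
                f (ptA 1 (i-1) K (deltaPt q n (ptA i (n-1) L z))))) := by
    rw [step1]
    apply Finset.sum_congr rfl
    intro L hL
    rw [Finset.mul_sum, Finset.mul_sum]
  rw [step2, ← Finset.sum_product']
  symm
  apply Finset.sum_nbij'
    (i := fun I => (((Finset.Icc i (n-1)).filter (fun j => j + 1 ∈ I)),
      ((Finset.Icc 1 (i-1)).filter (fun j => j ∈ I))))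
    (j := fun p => insert i (p.2 ∪ p.1.image (fun j => j + 1)))
  · intro I hI'
    exact Finset.mem_product.2 ⟨Finset.mem_powerset.2 (Finset.filter_subset _ _),
      Finset.mem_powerset.2 (Finset.filter_subset _ _)⟩
  · intro p hp
    obtain ⟨hp1, hp2⟩ := Finset.mem_product.1 hp
    have hp1' := Finset.mem_powerset.1 hp1
    have hp2' := Finset.mem_powerset.1 hp2
    refine Finset.mem_filter.2 ⟨Finset.mem_powerset.2 ?_, Finset.mem_insert_self _ _⟩
    intro x hx
    rcases Finset.mem_insert.1 hx with h | h
    · subst h; exact hi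
    · rcases Finset.mem_union.1 h with h | h
      · have := Finset.mem_Icc.1 (hp2' h)
        exact Finset.mem_Icc.2 ⟨by omega, by omega⟩
      · obtain ⟨y, hy, hyx⟩ := Finset.mem_image.1 h
        have := Finset.mem_Icc.1 (hp1' hy)
        exact Finset.mem_Icc.2 ⟨by omega, by omega⟩
  · intro I hI'
    obtain ⟨hIsub', hiI⟩ := Finset.mem_filter.1 hI'
    have hIsub := Finset.mem_powerset.1 hIsub'
    ext x
    simp only [Finset.mem_insert, Finset.mem_union, Finset.mem_image, Finset.mem_filter,
      Finset.mem_Icc]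
    constructor
    · rintro (h | h | ⟨y, ⟨hy1, hy2⟩, hyx⟩)
      · subst h; exact hiI
      · exact h.2
      · subst hyx; exact hy2
    · intro hx
      have hxb := Finset.mem_Icc.1 (hIsub hx)
      rcases lt_trichotomy x i with h | h | h
      · exact Or.inr (Or.inl ⟨⟨by omega, by omega⟩, hx⟩)
      · exact Or.inl h
      · refine Or.inr (Or.inr ⟨x - 1, ⟨⟨by omega, by omega⟩, ?_⟩, by omega⟩)
        rw [(by omega : x - 1 + 1 = x)]
        exact hx
  · intro p hp
    obtain ⟨hp1, hp2⟩ := Finset.mem_product.1 hp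
    have hp1' := Finset.mem_powerset.1 hp1
    have hp2' := Finset.mem_powerset.1 hp2
    have e1 : (Finset.Icc i (n-1)).filter
        (fun j => j + 1 ∈ insert i (p.2 ∪ p.1.image (fun j => j + 1))) = p.1 := by
      ext x
      simp only [Finset.mem_filter, Finset.mem_Icc, Finset.mem_insert, Finset.mem_union,
        Finset.mem_image]
      constructor
      · rintro ⟨⟨hx1, hx2⟩, (h | h | ⟨y, hy, hyx⟩)⟩
        · omega
        · have := Finset.mem_Icc.1 (hp2' h); omega
        · have : y = x := by omega
          subst this; exact hy
      · intro hx
        have := Finset.mem_Icc.1 (hp1' hx)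
        exact ⟨⟨by omega, by omega⟩, Or.inr (Or.inr ⟨x, hx, rfl⟩)⟩
    have e2 : (Finset.Icc 1 (i-1)).filter
        (fun j => j ∈ insert i (p.2 ∪ p.1.image (fun j => j + 1))) = p.2 := by
      ext x
      simp only [Finset.mem_filter, Finset.mem_Icc, Finset.mem_insert, Finset.mem_union,
        Finset.mem_image]
      constructor
      · rintro ⟨⟨hx1, hx2⟩, (h | h | ⟨y, hy, hyx⟩)⟩
        · omega
        · exact h
        · have := Finset.mem_Icc.1 (hp1' hy); omega
      · intro hx
        have := Finset.mem_Icc.1 (hp2' hx)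
        exact ⟨⟨by omega, by omega⟩, Or.inr (Or.inl hx)⟩
    exact Prod.ext e1 e2
  · intro I hI'
    obtain ⟨hIsub', hiI⟩ := Finset.mem_filter.1 hI'
    have hIsub := Finset.mem_powerset.1 hIsub'
    exact keyI n i hn hi1 hin I hIsub hiI f z hz1 hz2
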